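/- Let R > 0, K ∈ ℝ, C ∈ ℝ and a ∈ (0,R). Define U on the closed disk r ≤ R by U(x,y) = (KR/(2a²))·(r² − a²) + KR·ln(a/R) + C for 0 ≤ r ≤ a, and U(x,y) = KR·ln(r/R) + C for a ≤ r ≤ R. Then U is continuously differentiable on the open disk r < R, satisfies the wave equation ∂²U/∂x² − ∂²U/∂y² = 0 in the open disk r < a, satisfies the Laplace equation ∂²U/∂x² + ∂²U/∂y² = 0 in the open annulus a < r < R, and its outward radial derivative ∂U/∂r equals K on the boundary circle r = R. In particular U solves the Neumann problem for equation (2) with constant boundary flux K. -/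

import Mathlib

noncomputable def phiAux (R K C a : ℝ) (s : ℝ) : ℝ :=
  if s ≤ a ^ 2 then K * R / (2 * a ^ 2) * (s - a ^ 2) + K * R * Real.log (a / R) + C
  else K * R * Real.log (Real.sqrt s / R) + C

section aux
variable {R K C a : ℝ} (hR : 0 < R) (ha : a ∈ Set.Ioo 0 R)

lemma phi_outer (hR : 0 < R) (ha : a ∈ Set.Ioo 0 R) {s : ℝ} (hs : a ^ 2 < s) :
    phiAux R K C a s = K * R / 2 * Real.log s + (C - K * R * Real.log R) := by
  have hs0 : 0 < s := lt_trans (pow_pos ha.1 2) hs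
  rw [phiAux, if_neg (not_le.mpr hs), Real.log_div (Real.sqrt_ne_zero'.mpr hs0) hR.ne',
    Real.log_sqrt hs0.le]
  ring

lemma hq (x y : ℝ) : HasDerivAt (fun x : ℝ => x ^ 2 + y ^ 2) (2 * x) x := by
  simpa using (hasDerivAt_pow 2 x).add_const (y ^ 2)

lemma phi_hasDeriv (hR : 0 < R) (ha : a ∈ Set.Ioo 0 R) (s : ℝ) :
    HasDerivAt (phiAux R K C a) (K * R / (2 * max s (a ^ 2))) s := by
  have ha2 : (0:ℝ) < a ^ 2 := pow_pos ha.1 2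
  have hinner : ∀ t : ℝ, HasDerivAt
      (fun s => K * R / (2 * a ^ 2) * (s - a ^ 2) + K * R * Real.log (a / R) + C)
      (K * R / (2 * a ^ 2)) t := by
    intro t
    simpa using (((hasDerivAt_id t).sub_const (a ^ 2)).const_mul
      (K * R / (2 * a ^ 2))).add_const (K * R * Real.log (a / R)) |>.add_const C
  have houter : ∀ t : ℝ, t ≠ 0 → HasDerivAt
      (fun s => K * R / 2 * Real.log s + (C - K * R * Real.log R))
      (K * R / 2 * t⁻¹) t := by
    intro t ht
    exact ((Real.hasDerivAt_log ht).const_mul (K * R / 2)).add_const _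
  rcases lt_trichotomy s (a ^ 2) with h | h | h
  · rw [max_eq_right h.le]
    refine (hinner s).congr_of_eventuallyEq ?_
    filter_upwards [isOpen_Iio.mem_nhds h] with t (ht : t < a ^ 2)
    rw [phiAux, if_pos ht.le]
  · subst h
    rw [max_self]
    have h1 : HasDerivWithinAt (phiAux R K C a) (K * R / (2 * a ^ 2)) (Set.Iic (a ^ 2)) (a ^ 2) := by
      refine ((hinner (a ^ 2)).hasDerivWithinAt).congr (fun t ht => ?_) ?_
      · rw [phiAux, if_pos (Set.mem_Iic.mp ht)]
      · rw [phiAux, if_pos le_rfl]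
    have h2 : HasDerivWithinAt (phiAux R K C a) (K * R / (2 * a ^ 2)) (Set.Ici (a ^ 2)) (a ^ 2) := by
      have hd := (houter (a ^ 2) ha2.ne').hasDerivWithinAt (s := Set.Ici (a ^ 2))
      have heq : K * R / 2 * (a ^ 2)⁻¹ = K * R / (2 * a ^ 2) := by
        field_simp
      rw [heq] at hd
      refine hd.congr (fun t ht => ?_) ?_
      · rcases eq_or_lt_of_le (Set.mem_Ici.mp ht) with h | h
        · rw [phiAux, if_pos h.symm.le, ← h]
          have : Real.log (a / R) = Real.log a - Real.log R := Real.log_div ha.1.ne' hR.ne'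
          rw [this]
          have : Real.log (a ^ 2) = 2 * Real.log a := by
            rw [Real.log_pow]; push_cast; ring
          rw [this]; ring
        · rw [phi_outer hR ha h]
      · rw [phiAux, if_pos le_rfl]
        have : Real.log (a / R) = Real.log a - Real.log R := Real.log_div ha.1.ne' hR.ne'
        rw [this, Real.log_pow]; push_cast; ring
    have := h1.union h2
    rw [Set.Iic_union_Ici] at this
    exact this.hasDerivAt (by simp)
  · rw [max_eq_left h.le]
    have hs0 : (0:ℝ) < s := lt_trans ha2 h
    have hd := houter s hs0.ne'
    have heq : K * R / 2 * s⁻¹ = K * R / (2 * s) := by field_simp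
    rw [heq] at hd
    refine hd.congr_of_eventuallyEq ?_
    filter_upwards [isOpen_Ioi.mem_nhds h] with t (ht : a ^ 2 < t)
    rw [phi_outer hR ha ht]

lemma phi_contDiff (hR : 0 < R) (ha : a ∈ Set.Ioo 0 R) : ContDiff ℝ 1 (phiAux R K C a) := by
  have ha2 : (0:ℝ) < a ^ 2 := pow_pos ha.1 2
  rw [contDiff_one_iff_deriv]
  constructor
  · exact fun s => (phi_hasDeriv hR ha s).differentiableAt
  · have : deriv (phiAux R K C a) = fun s => K * R / (2 * max s (a ^ 2)) := by
      funext s; exact (phi_hasDeriv hR ha s).deriv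
    rw [this]
    refine continuous_const.div (by fun_prop) (fun s => ?_)
    have : (0:ℝ) < max s (a ^ 2) := lt_of_lt_of_le ha2 (le_max_right _ _)
    positivity

/-- second derivative of `t ↦ phiAux (t² + b²)` in the inner region -/
lemma sec_inner (hR : 0 < R) (ha : a ∈ Set.Ioo 0 R) {b t0 : ℝ} (h : t0 ^ 2 + b ^ 2 < a ^ 2) :
    deriv (deriv (fun t => phiAux R K C a (t ^ 2 + b ^ 2))) t0 = 2 * (K * R / (2 * a ^ 2)) := by
  set c := K * R / (2 * a ^ 2)
  have hopen : IsOpen {t : ℝ | t ^ 2 + b ^ 2 < a ^ 2} :=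
    isOpen_lt (by fun_prop) continuous_const
  have hev : (fun t => phiAux R K C a (t ^ 2 + b ^ 2)) =ᶠ[nhds t0]
      (fun t => c * (t ^ 2 + b ^ 2 - a ^ 2) + K * R * Real.log (a / R) + C) := by
    filter_upwards [hopen.mem_nhds h] with t ht
    rw [phiAux, if_pos (le_of_lt ht)]
  rw [(hev.deriv).deriv_eq]
  have hd : deriv (fun t => c * (t ^ 2 + b ^ 2 - a ^ 2) + K * R * Real.log (a / R) + C)
      = fun t => c * (2 * t) := by
    funext t
    exact ((((hq t b).sub_const (a ^ 2)).const_mul c).add_const _ |>.add_const C).deriv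
  rw [hd]
  have : HasDerivAt (fun t : ℝ => c * (2 * t)) (c * (2 * 1)) t0 :=
    ((hasDerivAt_id t0).const_mul 2).const_mul c
  rw [this.deriv]; ring

/-- second derivative of `t ↦ phiAux (t² + b²)` in the outer region -/
lemma sec_outer (hR : 0 < R) (ha : a ∈ Set.Ioo 0 R) {b t0 : ℝ} (h : a ^ 2 < t0 ^ 2 + b ^ 2) :
    deriv (deriv (fun t => phiAux R K C a (t ^ 2 + b ^ 2))) t0 =
      K * R / 2 * ((2 * (t0 ^ 2 + b ^ 2) - 2 * t0 * (2 * t0)) / (t0 ^ 2 + b ^ 2) ^ 2) := by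
  have ha2 : (0:ℝ) < a ^ 2 := pow_pos ha.1 2
  have hopen : IsOpen {t : ℝ | a ^ 2 < t ^ 2 + b ^ 2} :=
    isOpen_lt continuous_const (by fun_prop)
  have hmem := hopen.mem_nhds h
  have hev : (fun t => phiAux R K C a (t ^ 2 + b ^ 2)) =ᶠ[nhds t0]
      (fun t => K * R / 2 * Real.log (t ^ 2 + b ^ 2) + (C - K * R * Real.log R)) := by
    filter_upwards [hmem] with t ht
    exact phi_outer hR ha ht
  rw [(hev.deriv).deriv_eq]
  have hev2 : deriv (fun t => K * R / 2 * Real.log (t ^ 2 + b ^ 2) + (C - K * R * Real.log R))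
      =ᶠ[nhds t0] (fun t => K * R / 2 * (2 * t / (t ^ 2 + b ^ 2))) := by
    filter_upwards [hmem] with t (ht : a ^ 2 < t ^ 2 + b ^ 2)
    have hne : t ^ 2 + b ^ 2 ≠ 0 := (lt_trans ha2 ht).ne'
    exact ((((hq t b).log hne).const_mul (K * R / 2)).add_const _).deriv
  rw [hev2.deriv_eq]
  have hne : t0 ^ 2 + b ^ 2 ≠ 0 := (lt_trans ha2 h).ne'
  have hdiv : HasDerivAt (fun t : ℝ => 2 * t / (t ^ 2 + b ^ 2))
      ((2 * 1 * (t0 ^ 2 + b ^ 2) - 2 * t0 * (2 * t0)) / (t0 ^ 2 + b ^ 2) ^ 2) t0 :=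
    ((hasDerivAt_id t0).const_mul 2).div (hq t0 b) hne
  have := (hdiv.const_mul (K * R / 2)).deriv
  rw [this]; ring

end aux



/-- Second partial derivative of `U` in the first (x) variable. -/
noncomputable def pxx (U : ℝ × ℝ → ℝ) (p : ℝ × ℝ) : ℝ :=
  deriv (deriv (fun x => U (x, p.2))) p.1

/-- Second partial derivative of `U` in the second (y) variable. -/
noncomputable def pyy (U : ℝ × ℝ → ℝ) (p : ℝ × ℝ) : ℝ :=
  deriv (deriv (fun y => U (p.1, y))) p.2

/-- The piecewise function `U = (KR/(2a²))(r² - a²) + KR ln(a/R) + C` for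
`r ≤ a`, `U = KR ln(r/R) + C` for `a ≤ r ≤ R` solves the Neumann problem for
equation (2) with constant boundary flux `K`: it is C¹ in the open disk
`r < R`, satisfies the wave equation in `r < a`, the Laplace equation in
`a < r < R`, and its outward radial derivative `∂U/∂r` equals `K` on the
boundary circle `r = R` (the radial derivative at a boundary point `p` is the
derivative of `t ↦ U(t·p/R)` at `t = R`). -/
theorem model_neumann_eq2_type_changing
    (R K C a : ℝ) (hR : 0 < R) (ha : a ∈ Set.Ioo 0 R)
    (U : ℝ × ℝ → ℝ)
    (hU : ∀ p : ℝ × ℝ, U p =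
      if p.1 ^ 2 + p.2 ^ 2 ≤ a ^ 2 then
        K * R / (2 * a ^ 2) * (p.1 ^ 2 + p.2 ^ 2 - a ^ 2)
          + K * R * Real.log (a / R) + C
      else
        K * R * Real.log (Real.sqrt (p.1 ^ 2 + p.2 ^ 2) / R) + C) :
    ContDiffOn ℝ 1 U {p : ℝ × ℝ | p.1 ^ 2 + p.2 ^ 2 < R ^ 2} ∧
    (∀ p : ℝ × ℝ, p.1 ^ 2 + p.2 ^ 2 < a ^ 2 → pxx U p - pyy U p = 0) ∧
    (∀ p : ℝ × ℝ, a ^ 2 < p.1 ^ 2 + p.2 ^ 2 → p.1 ^ 2 + p.2 ^ 2 < R ^ 2 →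
      pxx U p + pyy U p = 0) ∧
    (∀ p : ℝ × ℝ, p.1 ^ 2 + p.2 ^ 2 = R ^ 2 →
      deriv (fun t : ℝ => U (t / R * p.1, t / R * p.2)) R = K) := by
  have hUphi : U = fun p : ℝ × ℝ => phiAux R K C a (p.1 ^ 2 + p.2 ^ 2) := by
    funext p; rw [hU p, phiAux]
  have hsecx : ∀ p : ℝ × ℝ, (fun x => U (x, p.2)) =
      fun x => phiAux R K C a (x ^ 2 + p.2 ^ 2) := by
    intro p; funext x; rw [hUphi]
  have hsecy : ∀ p : ℝ × ℝ, (fun y => U (p.1, y)) =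
      fun y => phiAux R K C a (y ^ 2 + p.1 ^ 2) := by
    intro p; funext y; rw [hUphi]; simp [add_comm]
  refine ⟨?_, ?_, ?_, ?_⟩
  · refine ContDiff.contDiffOn ?_
    rw [hUphi]
    exact (phi_contDiff hR ha).comp (by fun_prop)
  · intro p hp
    rw [pxx, pyy, hsecx p, hsecy p, sec_inner hR ha hp,
      sec_inner hR ha (by rw [add_comm]; exact hp), sub_self]
  · intro p hp hpR
    have hp' : a ^ 2 < p.2 ^ 2 + p.1 ^ 2 := by rw [add_comm]; exact hp
    rw [pxx, pyy, hsecx p, hsecy p, sec_outer hR ha hp, sec_outer hR ha hp']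
    have hkey : (2 * (p.2 ^ 2 + p.1 ^ 2) - 2 * p.2 * (2 * p.2)) / (p.2 ^ 2 + p.1 ^ 2) ^ 2
        = -((2 * (p.1 ^ 2 + p.2 ^ 2) - 2 * p.1 * (2 * p.1)) / (p.1 ^ 2 + p.2 ^ 2) ^ 2) := by
      rw [add_comm (p.2 ^ 2), ← neg_div]
      congr 1
      ring
    rw [hkey]
    ring
  · intro p hp
    have hfun : (fun t : ℝ => U (t / R * p.1, t / R * p.2)) =
        fun t : ℝ => phiAux R K C a (t ^ 2) := by
      funext t
      rw [hUphi]
      show phiAux R K C a ((t / R * p.1) ^ 2 + (t / R * p.2) ^ 2) = phiAux R K C a (t ^ 2)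
      congr 1
      have : (t / R * p.1) ^ 2 + (t / R * p.2) ^ 2 = (t / R) ^ 2 * (p.1 ^ 2 + p.2 ^ 2) := by ring
      rw [this, hp]
      field_simp
    rw [hfun]
    have haR : a ^ 2 < R ^ 2 := by
      have := ha.2
      nlinarith [ha.1]
    have hopen : IsOpen {t : ℝ | a ^ 2 < t ^ 2} := isOpen_lt continuous_const (by fun_prop)
    have hev : (fun t : ℝ => phiAux R K C a (t ^ 2)) =ᶠ[nhds R]
        (fun t => K * R / 2 * Real.log (t ^ 2) + (C - K * R * Real.log R)) := by
      filter_upwards [hopen.mem_nhds haR] with t (ht : a ^ 2 < t ^ 2)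
      exact phi_outer hR ha ht
    rw [hev.deriv_eq]
    have hR2 : (R : ℝ) ^ 2 ≠ 0 := by positivity
    have hd : HasDerivAt (fun t : ℝ => Real.log (t ^ 2)) (2 * R / R ^ 2) R := by
      have := (hq R 0).log (by simpa using hR2)
      simpa using this
    have := ((hd.const_mul (K * R / 2)).add_const (C - K * R * Real.log R)).deriv
    rw [this]
    field_simp
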